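/- arXiv:2211.02839 — 6 statements merged into one kernel-verified Lean document; each statement's English description precedes it below -/
import Mathlib

section
/- If the 4×4 matrix A (as defined) is positive semidefinite, then 1 + 2Re(x·ȳ·t) ≥ |x|² + |y|² + |t|². -/
open Matrix Complex ComplexOrder

lemma psd_det_nonneg {n : Type*} [Fintype n] [DecidableEq n] {B : Matrix n n ℂ}
    (hB : B.PosSemidef) : 0 ≤ B.det := by
  rw [hB.isHermitian.det_eq_prod_eigenvalues]
  rw [← RCLike.ofReal_prod]
  exact Complex.zero_le_real.mpr <| Finset.prod_nonneg fun i _ => hB.eigenvalues_nonneg i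

theorem lemma1_y1 (x y z t u w : ℂ)
    (hA : (!![1, x, y, z;
              (starRingEnd ℂ) x, 1, t, u;
              (starRingEnd ℂ) y, (starRingEnd ℂ) t, 1, w;
              (starRingEnd ℂ) z, (starRingEnd ℂ) u, (starRingEnd ℂ) w, 1] :
            Matrix (Fin 4) (Fin 4) ℂ).PosSemidef) :
    1 + 2 * (x * (starRingEnd ℂ) y * t).re ≥ ‖x‖ ^ 2 + ‖y‖ ^ 2 + ‖t‖ ^ 2 := by
  have hB := hA.submatrix (![0, 1, 2] : Fin 3 → Fin 4)
  have hd := psd_det_nonneg hB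
  rw [Matrix.det_fin_three] at hd
  simp only [Matrix.submatrix_apply, Matrix.cons_val', Matrix.cons_val_zero, Matrix.cons_val_one,
    Matrix.head_cons, Matrix.cons_val_two, Matrix.tail_cons, Matrix.empty_val',
    Matrix.cons_val_fin_one, Matrix.of_apply, Matrix.head_fin_const] at hd
  rw [Complex.le_def] at hd
  have h1 := hd.1
  simp only [Complex.zero_re, Complex.sub_re, Complex.add_re, Complex.mul_re, Complex.one_re,
    Complex.one_im, Complex.conj_re, Complex.conj_im, Complex.mul_im, Complex.sub_im,
    Complex.add_im] at h1
  have hx := Complex.sq_norm x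
  have hy := Complex.sq_norm y
  have ht := Complex.sq_norm t
  simp only [Complex.normSq_apply] at hx hy ht
  rw [hx, hy, ht]
  simp only [Complex.mul_re, Complex.conj_re, Complex.conj_im, Complex.mul_im]
  nlinarith [h1]
end

section
/- If the 4×4 matrix A (as defined) is positive semidefinite, then per(A) ≥ 1 + 2Re(x·ȳ·t) + |x|² + |y|² + |t|², and moreover 1 + 2Re(x·ȳ·t) + |x|² + |y|² + |t|² ≥ 0. -/
open Matrix Equiv Finset Complex ComplexOrder

lemma sum_perm_succ' {n : ℕ} {M : Type*} [AddCommMonoid M] (f : Perm (Fin (n+1)) → M) :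
    ∑ σ : Perm (Fin (n+1)), f σ =
      ∑ i : Fin (n+1), ∑ τ : Perm (Fin n), f (Equiv.Perm.decomposeFin.symm (i, τ)) := by
  rw [← (Equiv.Perm.decomposeFin (n:=n)).symm.sum_comp f, Fintype.sum_prod_type]

set_option maxHeartbeats 1000000 in
lemma perm_expand4 (M : Matrix (Fin 4) (Fin 4) ℂ) :
    M.permanent =
      M 0 0 * M 1 1 * M 2 2 * M 3 3 +
      M 0 0 * M 1 1 * M 3 2 * M 2 3 +
      M 0 0 * M 2 1 * M 1 2 * M 3 3 +
      M 0 0 * M 2 1 * M 3 2 * M 1 3 +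
      M 0 0 * M 3 1 * M 1 2 * M 2 3 +
      M 0 0 * M 3 1 * M 2 2 * M 1 3 +
      M 1 0 * M 0 1 * M 2 2 * M 3 3 +
      M 1 0 * M 0 1 * M 3 2 * M 2 3 +
      M 1 0 * M 2 1 * M 0 2 * M 3 3 +
      M 1 0 * M 2 1 * M 3 2 * M 0 3 +
      M 1 0 * M 3 1 * M 0 2 * M 2 3 +
      M 1 0 * M 3 1 * M 2 2 * M 0 3 +
      M 2 0 * M 0 1 * M 1 2 * M 3 3 +
      M 2 0 * M 0 1 * M 3 2 * M 1 3 +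
      M 2 0 * M 1 1 * M 0 2 * M 3 3 +
      M 2 0 * M 1 1 * M 3 2 * M 0 3 +
      M 2 0 * M 3 1 * M 0 2 * M 1 3 +
      M 2 0 * M 3 1 * M 1 2 * M 0 3 +
      M 3 0 * M 0 1 * M 1 2 * M 2 3 +
      M 3 0 * M 0 1 * M 2 2 * M 1 3 +
      M 3 0 * M 1 1 * M 0 2 * M 2 3 +
      M 3 0 * M 1 1 * M 2 2 * M 0 3 +
      M 3 0 * M 2 1 * M 0 2 * M 1 3 +
      M 3 0 * M 2 1 * M 1 2 * M 0 3 := by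
  rw [Matrix.permanent]
  simp only [sum_perm_succ']
  simp only [Fin.sum_univ_succ, Fin.prod_univ_succ, Finset.univ_unique, Finset.sum_singleton,
    Finset.univ_eq_empty, Finset.sum_empty, Fin.prod_univ_zero, Finset.sum_const]
  simp only [Equiv.Perm.decomposeFin_symm_apply_zero, Equiv.Perm.decomposeFin_symm_apply_succ]
  norm_num [Equiv.swap_apply_def, Fin.succ, Fin.ext_iff]
  simp only [Fin.reduceFinMk]
  ring

set_option maxHeartbeats 2000000 in
theorem lemma2_y1 (x y z t u w : ℂ)
    (A : Matrix (Fin 4) (Fin 4) ℂ)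
    (hAdef : A = !![1, x, y, z;
                    (starRingEnd ℂ) x, 1, t, u;
                    (starRingEnd ℂ) y, (starRingEnd ℂ) t, 1, w;
                    (starRingEnd ℂ) z, (starRingEnd ℂ) u, (starRingEnd ℂ) w, 1])
    (hA : A.PosSemidef) :
    ((1 + 2 * (x * (starRingEnd ℂ) y * t).re + ‖x‖ ^ 2 + ‖y‖ ^ 2 + ‖t‖ ^ 2 : ℝ) : ℂ) ≤ A.permanent ∧
      (0 : ℝ) ≤ 1 + 2 * (x * (starRingEnd ℂ) y * t).re + ‖x‖ ^ 2 + ‖y‖ ^ 2 + ‖t‖ ^ 2 := by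
  obtain ⟨B, hB⟩ : ∃ B : Matrix (Fin 4) (Fin 4) ℂ, A = Bᴴ * B := by
    open MatrixOrder in exact CStarAlgebra.nonneg_iff_eq_star_mul_self.mp hA.nonneg
  have hent : ∀ i j, A i j = ∑ p : Fin 4, star (B p i) * B p j := by
    intro i j
    rw [hB, Matrix.mul_apply]
    simp only [Matrix.conjTranspose_apply]
  have hG : ∀ i j, (∑ p : Fin 4, B p i * star (B p j)) = star (A i j) := by
    intro i j
    rw [hent i j, star_sum]
    exact Finset.sum_congr rfl fun p _ => by rw [star_mul', star_star]
  have hfac : ∀ (c : ℂ) (f g : Fin 4 → ℂ),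
      (∑ p : Fin 4, ∑ q : Fin 4, c * (f p * g q))
        = c * ((∑ p : Fin 4, f p) * (∑ q : Fin 4, g q)) := by
    intro c f g
    have h1 : ∀ p, (∑ q : Fin 4, c * (f p * g q)) = (c * f p) * ∑ q : Fin 4, g q := by
      intro p
      rw [Finset.mul_sum]
      exact Finset.sum_congr rfl fun q _ => by ring
    simp only [h1]
    rw [← Finset.sum_mul, ← Finset.mul_sum, mul_assoc]
  have hWW : ∀ p q : Fin 4,
      (star z * (B p 1 * B q 2 + B p 2 * B q 1) + star u * (B p 0 * B q 2 + B p 2 * B q 0) + star w * (B p 0 * B q 1 + B p 1 * B q 0)) * star (star z * (B p 1 * B q 2 + B p 2 * B q 1) + star u * (B p 0 * B q 2 + B p 2 * B q 0) + star w * (B p 0 * B q 1 + B p 1 * B q 0)) =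
        (star z * z) * ((B p 1 * star (B p 1)) * (B q 2 * star (B q 2))) +
        (star z * z) * ((B p 1 * star (B p 2)) * (B q 2 * star (B q 1))) +
        (star z * u) * ((B p 1 * star (B p 0)) * (B q 2 * star (B q 2))) +
        (star z * u) * ((B p 1 * star (B p 2)) * (B q 2 * star (B q 0))) +
        (star z * w) * ((B p 1 * star (B p 0)) * (B q 2 * star (B q 1))) +
        (star z * w) * ((B p 1 * star (B p 1)) * (B q 2 * star (B q 0))) +
        (star z * z) * ((B p 2 * star (B p 1)) * (B q 1 * star (B q 2))) +
        (star z * z) * ((B p 2 * star (B p 2)) * (B q 1 * star (B q 1))) +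
        (star z * u) * ((B p 2 * star (B p 0)) * (B q 1 * star (B q 2))) +
        (star z * u) * ((B p 2 * star (B p 2)) * (B q 1 * star (B q 0))) +
        (star z * w) * ((B p 2 * star (B p 0)) * (B q 1 * star (B q 1))) +
        (star z * w) * ((B p 2 * star (B p 1)) * (B q 1 * star (B q 0))) +
        (star u * z) * ((B p 0 * star (B p 1)) * (B q 2 * star (B q 2))) +
        (star u * z) * ((B p 0 * star (B p 2)) * (B q 2 * star (B q 1))) +
        (star u * u) * ((B p 0 * star (B p 0)) * (B q 2 * star (B q 2))) +
        (star u * u) * ((B p 0 * star (B p 2)) * (B q 2 * star (B q 0))) +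
        (star u * w) * ((B p 0 * star (B p 0)) * (B q 2 * star (B q 1))) +
        (star u * w) * ((B p 0 * star (B p 1)) * (B q 2 * star (B q 0))) +
        (star u * z) * ((B p 2 * star (B p 1)) * (B q 0 * star (B q 2))) +
        (star u * z) * ((B p 2 * star (B p 2)) * (B q 0 * star (B q 1))) +
        (star u * u) * ((B p 2 * star (B p 0)) * (B q 0 * star (B q 2))) +
        (star u * u) * ((B p 2 * star (B p 2)) * (B q 0 * star (B q 0))) +
        (star u * w) * ((B p 2 * star (B p 0)) * (B q 0 * star (B q 1))) +
        (star u * w) * ((B p 2 * star (B p 1)) * (B q 0 * star (B q 0))) +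
        (star w * z) * ((B p 0 * star (B p 1)) * (B q 1 * star (B q 2))) +
        (star w * z) * ((B p 0 * star (B p 2)) * (B q 1 * star (B q 1))) +
        (star w * u) * ((B p 0 * star (B p 0)) * (B q 1 * star (B q 2))) +
        (star w * u) * ((B p 0 * star (B p 2)) * (B q 1 * star (B q 0))) +
        (star w * w) * ((B p 0 * star (B p 0)) * (B q 1 * star (B q 1))) +
        (star w * w) * ((B p 0 * star (B p 1)) * (B q 1 * star (B q 0))) +
        (star w * z) * ((B p 1 * star (B p 1)) * (B q 0 * star (B q 2))) +
        (star w * z) * ((B p 1 * star (B p 2)) * (B q 0 * star (B q 1))) +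
        (star w * u) * ((B p 1 * star (B p 0)) * (B q 0 * star (B q 2))) +
        (star w * u) * ((B p 1 * star (B p 2)) * (B q 0 * star (B q 0))) +
        (star w * w) * ((B p 1 * star (B p 0)) * (B q 0 * star (B q 1))) +
        (star w * w) * ((B p 1 * star (B p 1)) * (B q 0 * star (B q 0))) := by
    intro p q
    simp only [star_add, star_mul', star_star]
    ring
  have e00 : A 0 0 = 1 := by rw [hAdef]; rfl
  have e01 : A 0 1 = x := by rw [hAdef]; rfl
  have e02 : A 0 2 = y := by rw [hAdef]; rfl
  have e03 : A 0 3 = z := by rw [hAdef]; rfl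
  have e10 : A 1 0 = (starRingEnd ℂ) x := by rw [hAdef]; rfl
  have e11 : A 1 1 = 1 := by rw [hAdef]; rfl
  have e12 : A 1 2 = t := by rw [hAdef]; rfl
  have e13 : A 1 3 = u := by rw [hAdef]; rfl
  have e20 : A 2 0 = (starRingEnd ℂ) y := by rw [hAdef]; rfl
  have e21 : A 2 1 = (starRingEnd ℂ) t := by rw [hAdef]; rfl
  have e22 : A 2 2 = 1 := by rw [hAdef]; rfl
  have e23 : A 2 3 = w := by rw [hAdef]; rfl
  have e30 : A 3 0 = (starRingEnd ℂ) z := by rw [hAdef]; rfl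
  have e31 : A 3 1 = (starRingEnd ℂ) u := by rw [hAdef]; rfl
  have e32 : A 3 2 = (starRingEnd ℂ) w := by rw [hAdef]; rfl
  have e33 : A 3 3 = 1 := by rw [hAdef]; rfl
  have hkey : A.permanent =
      (1 + x * t * star y + star x * star t * y + x * star x + y * star y + t * star t)
        + (1/2) * (∑ p : Fin 4, ∑ q : Fin 4, (star z * (B p 1 * B q 2 + B p 2 * B q 1) + star u * (B p 0 * B q 2 + B p 2 * B q 0) + star w * (B p 0 * B q 1 + B p 1 * B q 0)) * star (star z * (B p 1 * B q 2 + B p 2 * B q 1) + star u * (B p 0 * B q 2 + B p 2 * B q 0) + star w * (B p 0 * B q 1 + B p 1 * B q 0))) := by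
    rw [perm_expand4 A]
    simp only [hWW]
    simp only [Finset.sum_add_distrib]
    simp only [hfac]
    simp only [hG]
    simp only [e00, e01, e02, e03, e10, e11, e12, e13, e20, e21, e22, e23, e30, e31, e32, e33]
    simp only [Complex.star_def, Complex.conj_conj, _root_.map_one, star_one]
    ring
  have habs : ∀ a : ℂ, ((‖a‖ ^ 2 : ℝ) : ℂ) = a * (starRingEnd ℂ) a := fun a => by
    rw [← Complex.normSq_eq_norm_sq, Complex.mul_conj]
  have hE : ((1 + 2 * (x * (starRingEnd ℂ) y * t).re + ‖x‖ ^ 2 + ‖y‖ ^ 2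
        + ‖t‖ ^ 2 : ℝ) : ℂ)
      = 1 + x * t * star y + star x * star t * y + x * star x + y * star y + t * star t := by
    rw [Complex.ofReal_add, Complex.ofReal_add, Complex.ofReal_add, Complex.ofReal_add,
      Complex.ofReal_one, habs, habs, habs, ← Complex.add_conj]
    simp only [Complex.star_def, _root_.map_mul, Complex.conj_conj]
    ring
  have ht2 : ‖t‖ ^ 2 ≤ 1 := by
    have h2 := hA.dotProduct_mulVec_nonneg ![0, 1, -(starRingEnd ℂ) t, 0]
    rw [hAdef] at h2
    have h2' : (0:ℂ) ≤ ((1 - ‖t‖ ^ 2 : ℝ) : ℂ) := by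
      refine le_of_le_of_eq h2 ?_
      rw [Complex.ofReal_sub, Complex.ofReal_one, habs]
      simp [dotProduct, Matrix.mulVec, Fin.sum_univ_four]
      ring
    have := Complex.zero_le_real.mp h2'
    linarith
  refine ⟨?_, ?_⟩
  · rw [hkey, ← hE]
    refine le_add_of_nonneg_right ?_
    refine mul_nonneg ?_ (Finset.sum_nonneg fun p _ => Finset.sum_nonneg fun q _ =>
      mul_star_self_nonneg _)
    rw [show (1/2 : ℂ) = ((1/2 : ℝ) : ℂ) by norm_num]
    rw [Complex.zero_le_real]
    norm_num
  · have hre := (abs_le.mp (Complex.abs_re_le_norm (x * (starRingEnd ℂ) y * t))).1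
    have habsprod : ‖x * (starRingEnd ℂ) y * t‖
        = ‖x‖ * ‖y‖ * ‖t‖ := by
      simp [_root_.map_mul, Complex.norm_conj]
    rw [habsprod] at hre
    have hb2 : (0:ℝ) ≤ ‖y‖ ^ 2 * (1 - ‖t‖ ^ 2) :=
      mul_nonneg (sq_nonneg _) (by linarith)
    nlinarith [sq_nonneg (‖x‖ - ‖y‖ * ‖t‖)]
end

section
/- If the 4×4 matrix A (as defined) is positive semidefinite, then per(A) ≥ 1 + 2Re(x·u·z̄) + |x|² + |z|² + |u|², and moreover 1 + 2Re(x·u·z̄) + |x|² + |z|² + |u|² ≥ 0. -/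
open Matrix Complex ComplexOrder
open Equiv Finset Kronecker

theorem permanent_succ' {R : Type*} [CommSemiring R] {n : ℕ} (A : Matrix (Fin (n+1)) (Fin (n+1)) R) :
    A.permanent = ∑ p : Fin (n+1), A p 0 *
      (A.submatrix (fun k : Fin n => Equiv.swap 0 p k.succ) Fin.succ).permanent := by
  rw [Matrix.permanent,
    ← (Equiv.Perm.decomposeFin (n := n)).symm.sum_comp (fun σ => ∏ i, A (σ i) i)]
  rw [Fintype.sum_prod_type]
  refine Finset.sum_congr rfl fun p _ => ?_
  rw [Matrix.permanent, Finset.mul_sum]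
  refine Finset.sum_congr rfl fun τ _ => ?_
  rw [Fin.prod_univ_succ]
  congr 1
  · simp
  · refine Finset.prod_congr rfl fun i _ => ?_
    simp [Equiv.Perm.decomposeFin_symm_apply_succ, Matrix.submatrix]

theorem permanent_fin_three' {R : Type*} [CommRing R] (A : Matrix (Fin 3) (Fin 3) R) :
    A.permanent =
      A 0 0 * A 1 1 * A 2 2 + A 0 0 * A 1 2 * A 2 1 + A 0 1 * A 1 0 * A 2 2 +
      A 0 1 * A 1 2 * A 2 0 + A 0 2 * A 1 0 * A 2 1 + A 0 2 * A 1 1 * A 2 0 := by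
  simp [permanent_succ', Fin.sum_univ_succ, Matrix.submatrix, Equiv.swap_apply_def,
    Fin.succ, Matrix.permanent_unique]
  ring

theorem permanent_fin_four' {R : Type*} [CommRing R] (A : Matrix (Fin 4) (Fin 4) R) :
    A.permanent =
      A 0 0 * A 1 1 * A 2 2 * A 3 3 + A 0 0 * A 1 1 * A 2 3 * A 3 2 +
      A 0 0 * A 1 2 * A 2 1 * A 3 3 + A 0 0 * A 1 2 * A 2 3 * A 3 1 +
      A 0 0 * A 1 3 * A 2 1 * A 3 2 + A 0 0 * A 1 3 * A 2 2 * A 3 1 +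
      A 0 1 * A 1 0 * A 2 2 * A 3 3 + A 0 1 * A 1 0 * A 2 3 * A 3 2 +
      A 0 1 * A 1 2 * A 2 0 * A 3 3 + A 0 1 * A 1 2 * A 2 3 * A 3 0 +
      A 0 1 * A 1 3 * A 2 0 * A 3 2 + A 0 1 * A 1 3 * A 2 2 * A 3 0 +
      A 0 2 * A 1 0 * A 2 1 * A 3 3 + A 0 2 * A 1 0 * A 2 3 * A 3 1 +
      A 0 2 * A 1 1 * A 2 0 * A 3 3 + A 0 2 * A 1 1 * A 2 3 * A 3 0 +
      A 0 2 * A 1 3 * A 2 0 * A 3 1 + A 0 2 * A 1 3 * A 2 1 * A 3 0 +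
      A 0 3 * A 1 0 * A 2 1 * A 3 2 + A 0 3 * A 1 0 * A 2 2 * A 3 1 +
      A 0 3 * A 1 1 * A 2 0 * A 3 2 + A 0 3 * A 1 1 * A 2 2 * A 3 0 +
      A 0 3 * A 1 2 * A 2 0 * A 3 1 + A 0 3 * A 1 2 * A 2 1 * A 3 0 := by
  simp [permanent_succ', Fin.sum_univ_succ, Matrix.submatrix, Equiv.swap_apply_def,
    Fin.succ, Matrix.permanent_unique]
  ring

set_option maxHeartbeats 1000000 in
theorem key_identity (B : Matrix (Fin 3) (Fin 3) ℂ) (y t w : ℂ) :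
    (!![B 0 0, B 0 1, y, B 0 2;
        B 1 0, B 1 1, t, B 1 2;
        star y, star t, 1, w;
        B 2 0, B 2 1, star w, B 2 2]).permanent
      = B.permanent + (1 / 2) *
          (dotProduct
            (star (fun p : Fin 3 × Fin 3 =>
              !![0, w, star t; w, 0, star y; star t, star y, 0] p.1 p.2))
            ((B ⊗ₖ B) *ᵥ (fun p : Fin 3 × Fin 3 =>
              !![0, w, star t; w, 0, star y; star t, star y, 0] p.1 p.2))) := by
  rw [permanent_fin_four', permanent_fin_three']
  simp only [dotProduct, Matrix.mulVec, Fintype.sum_prod_type, Fin.sum_univ_three,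
    Matrix.kroneckerMap_apply, Pi.star_apply,
    Matrix.cons_val_zero, Matrix.cons_val_one, Matrix.cons_val_two, Matrix.cons_val_three,
    Matrix.cons_val_succ, Fin.succ_zero_eq_one, Fin.succ_one_eq_two, Matrix.head_cons,
    Matrix.vecHead, Matrix.vecTail, Function.comp, star_zero, star_star, Matrix.of_apply,
    star_mul', star_add, star_one]
  ring

theorem kronecker_posSemidef {n : Type*} [Fintype n] [DecidableEq n]
    {B : Matrix n n ℂ} (hB : B.PosSemidef) : (B ⊗ₖ B).PosSemidef := by
  exact hB.kronecker hB

theorem lemma2_y2 (x y z t u w : ℂ)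
    (A : Matrix (Fin 4) (Fin 4) ℂ)
    (hAdef : A = !![1, x, y, z;
                    (starRingEnd ℂ) x, 1, t, u;
                    (starRingEnd ℂ) y, (starRingEnd ℂ) t, 1, w;
                    (starRingEnd ℂ) z, (starRingEnd ℂ) u, (starRingEnd ℂ) w, 1])
    (hA : A.PosSemidef) :
    ((1 + 2 * (x * u * (starRingEnd ℂ) z).re + ‖x‖ ^ 2 + ‖z‖ ^ 2 + ‖u‖ ^ 2 : ℝ) : ℂ) ≤ A.permanent ∧
      (0 : ℝ) ≤ 1 + 2 * (x * u * (starRingEnd ℂ) z).re + ‖x‖ ^ 2 + ‖z‖ ^ 2 + ‖u‖ ^ 2 := by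
  have habs : ∀ q : ℂ, ((‖q‖ ^ 2 : ℝ) : ℂ) = q * star q := by
    intro q; rw [Complex.sq_norm]; exact (Complex.mul_conj q).symm
  have h2re : ((2 * (x * u * (starRingEnd ℂ) z).re : ℝ) : ℂ)
      = x * u * star z + star x * star u * z := by
    have h := Complex.add_conj (x * u * (starRingEnd ℂ) z)
    rw [_root_.map_mul, _root_.map_mul, Complex.conj_conj] at h
    simp only [starRingEnd_apply] at h ⊢
    push_cast at h ⊢
    linear_combination -h
  simp only [starRingEnd_apply] at h2re
  push_cast at habs h2re
  have hsub : A.submatrix ![0, 1, 3] ![0, 1, 3]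
      = !![1, x, z; (starRingEnd ℂ) x, 1, u; (starRingEnd ℂ) z, (starRingEnd ℂ) u, 1] := by
    subst hAdef
    ext i j
    fin_cases i <;> fin_cases j <;> rfl
  have hBex : (!![1, x, z; (starRingEnd ℂ) x, 1, u;
      (starRingEnd ℂ) z, (starRingEnd ℂ) u, 1] : Matrix (Fin 3) (Fin 3) ℂ).PosSemidef :=
    hsub ▸ hA.submatrix ![0, 1, 3]
  have hK := kronecker_posSemidef hBex
  have hQ := hK.dotProduct_mulVec_nonneg (fun p : Fin 3 × Fin 3 =>
    !![0, w, star t; w, 0, star y; star t, star y, 0] p.1 p.2)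
  have hAeq : A = !![(!![1, x, z; (starRingEnd ℂ) x, 1, u; (starRingEnd ℂ) z, (starRingEnd ℂ) u, 1] : Matrix (Fin 3) (Fin 3) ℂ) 0 0,
        (!![1, x, z; (starRingEnd ℂ) x, 1, u; (starRingEnd ℂ) z, (starRingEnd ℂ) u, 1] : Matrix (Fin 3) (Fin 3) ℂ) 0 1, y,
        (!![1, x, z; (starRingEnd ℂ) x, 1, u; (starRingEnd ℂ) z, (starRingEnd ℂ) u, 1] : Matrix (Fin 3) (Fin 3) ℂ) 0 2;
        (!![1, x, z; (starRingEnd ℂ) x, 1, u; (starRingEnd ℂ) z, (starRingEnd ℂ) u, 1] : Matrix (Fin 3) (Fin 3) ℂ) 1 0,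
        (!![1, x, z; (starRingEnd ℂ) x, 1, u; (starRingEnd ℂ) z, (starRingEnd ℂ) u, 1] : Matrix (Fin 3) (Fin 3) ℂ) 1 1, t,
        (!![1, x, z; (starRingEnd ℂ) x, 1, u; (starRingEnd ℂ) z, (starRingEnd ℂ) u, 1] : Matrix (Fin 3) (Fin 3) ℂ) 1 2;
        star y, star t, 1, w;
        (!![1, x, z; (starRingEnd ℂ) x, 1, u; (starRingEnd ℂ) z, (starRingEnd ℂ) u, 1] : Matrix (Fin 3) (Fin 3) ℂ) 2 0,
        (!![1, x, z; (starRingEnd ℂ) x, 1, u; (starRingEnd ℂ) z, (starRingEnd ℂ) u, 1] : Matrix (Fin 3) (Fin 3) ℂ) 2 1, star w,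
        (!![1, x, z; (starRingEnd ℂ) x, 1, u; (starRingEnd ℂ) z, (starRingEnd ℂ) u, 1] : Matrix (Fin 3) (Fin 3) ℂ) 2 2] := by
    subst hAdef
    ext i j
    fin_cases i <;> fin_cases j <;> rfl
  have hSB : ((1 + 2 * (x * u * (starRingEnd ℂ) z).re + ‖x‖ ^ 2
      + ‖z‖ ^ 2 + ‖u‖ ^ 2 : ℝ) : ℂ)
      = (!![1, x, z; (starRingEnd ℂ) x, 1, u;
          (starRingEnd ℂ) z, (starRingEnd ℂ) u, 1] : Matrix (Fin 3) (Fin 3) ℂ).permanent := by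
    rw [permanent_fin_three']
    simp only [Matrix.cons_val_zero, Matrix.cons_val_one, Matrix.cons_val_two,
      Matrix.cons_val_three, Matrix.cons_val_succ, Fin.succ_zero_eq_one, Fin.succ_one_eq_two,
      Matrix.head_cons, Matrix.vecHead, Matrix.vecTail, Function.comp, Matrix.of_apply,
      starRingEnd_apply]
    push_cast
    linear_combination habs x + habs z + habs u + h2re
  have hhalf : (0 : ℂ) ≤ (1 / 2 : ℂ) := by
    rw [show (1 / 2 : ℂ) = ((1 / 2 : ℝ) : ℂ) by push_cast; try ring]
    exact Complex.zero_le_real.mpr (by norm_num)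
  constructor
  · rw [hAeq, key_identity, ← hSB]
    exact le_add_of_nonneg_right (mul_nonneg hhalf hQ)
  · have hq2 : 0 ≤ dotProduct (star ![z, u])
        ((A.submatrix ![0, 1] ![0, 1]) *ᵥ ![z, u]) := (hA.submatrix ![0, 1]).dotProduct_mulVec_nonneg ![z, u]
    have hg : ((2 * (x * u * (starRingEnd ℂ) z).re + ‖z‖ ^ 2
        + ‖u‖ ^ 2 : ℝ) : ℂ)
        = dotProduct (star ![z, u]) ((A.submatrix ![0, 1] ![0, 1]) *ᵥ ![z, u]) := by
      subst hAdef
      simp only [dotProduct, Matrix.mulVec, Fin.sum_univ_two, Matrix.submatrix_apply,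
        Matrix.cons_val_zero, Matrix.cons_val_one, Matrix.cons_val_two, Matrix.cons_val_three,
        Matrix.cons_val_succ, Fin.succ_zero_eq_one, Fin.succ_one_eq_two,
        Matrix.head_cons, Pi.star_apply,
        Matrix.of_apply, Matrix.vecHead, Matrix.vecTail, Function.comp, starRingEnd_apply]
      push_cast
      linear_combination habs z + habs u + h2re
    have h0 : (0 : ℝ) ≤ 2 * (x * u * (starRingEnd ℂ) z).re + ‖z‖ ^ 2
        + ‖u‖ ^ 2 := by
      have := hg ▸ hq2
      exact_mod_cast Complex.zero_le_real.mp this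
    nlinarith [sq_nonneg (‖x‖)]
end

section
/- If the 4×4 matrix A (as defined) is positive semidefinite, then per(A) ≥ 1 + 2Re(t·w·ū) + |t|² + |u|² + |w|², and moreover 1 + 2Re(t·w·ū) + |t|² + |u|² + |w|² ≥ 0. -/
set_option maxHeartbeats 1600000
set_option maxRecDepth 16000

open Matrix Complex ComplexOrder

theorem permanent_fin_four_aux (M : Matrix (Fin 4) (Fin 4) ℂ) : M.permanent =
    M 0 0 * M 1 1 * M 2 2 * M 3 3 + M 0 0 * M 1 1 * M 3 2 * M 2 3 +
    M 0 0 * M 2 1 * M 1 2 * M 3 3 + M 0 0 * M 2 1 * M 3 2 * M 1 3 +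
    M 0 0 * M 3 1 * M 2 2 * M 1 3 + M 0 0 * M 3 1 * M 1 2 * M 2 3 +
    M 1 0 * M 0 1 * M 2 2 * M 3 3 + M 1 0 * M 0 1 * M 3 2 * M 2 3 +
    M 1 0 * M 2 1 * M 0 2 * M 3 3 + M 1 0 * M 2 1 * M 3 2 * M 0 3 +
    M 1 0 * M 3 1 * M 2 2 * M 0 3 + M 1 0 * M 3 1 * M 0 2 * M 2 3 +
    M 2 0 * M 1 1 * M 0 2 * M 3 3 + M 2 0 * M 1 1 * M 3 2 * M 0 3 +
    M 2 0 * M 0 1 * M 1 2 * M 3 3 + M 2 0 * M 0 1 * M 3 2 * M 1 3 +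
    M 2 0 * M 3 1 * M 0 2 * M 1 3 + M 2 0 * M 3 1 * M 1 2 * M 0 3 +
    M 3 0 * M 1 1 * M 2 2 * M 0 3 + M 3 0 * M 1 1 * M 0 2 * M 2 3 +
    M 3 0 * M 2 1 * M 1 2 * M 0 3 + M 3 0 * M 2 1 * M 0 2 * M 1 3 +
    M 3 0 * M 0 1 * M 2 2 * M 1 3 + M 3 0 * M 0 1 * M 1 2 * M 2 3 := by
  rw [Matrix.permanent]
  rw [← (Equiv.Perm.decomposeFin (n := 3)).symm.sum_comp]
  rw [Fintype.sum_prod_type]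
  simp only [Fin.prod_univ_succ, Equiv.Perm.decomposeFin_symm_apply_zero,
    Equiv.Perm.decomposeFin_symm_apply_succ]
  simp only [← (Equiv.Perm.decomposeFin (n := 2)).symm.sum_comp, Fintype.sum_prod_type]
  simp only [Equiv.Perm.decomposeFin_symm_apply_zero, Equiv.Perm.decomposeFin_symm_apply_succ]
  simp only [← (Equiv.Perm.decomposeFin (n := 1)).symm.sum_comp, Fintype.sum_prod_type]
  simp only [Equiv.Perm.decomposeFin_symm_apply_zero, Equiv.Perm.decomposeFin_symm_apply_succ]
  simp only [Finset.univ_unique, Finset.sum_singleton, Fin.prod_univ_zero, mul_one,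
    Fin.sum_univ_four, Fin.sum_univ_two, Fin.sum_univ_succ]
  norm_num [Fin.ext_iff, Equiv.swap_apply_def]
  norm_num [show (Fin.succ 2 : Fin 4) = 3 from rfl]
  ring

theorem gram_key_aux (x y z : ℂ) (B : Matrix (Fin 4) (Fin 4) ℂ) :
    (∑ r : Fin 4, ∑ s : Fin 4,
      (starRingEnd ℂ) (x * (B r 2 * B s 3 + B r 3 * B s 2) + y * (B r 1 * B s 3 + B r 3 * B s 1)
          + z * (B r 1 * B s 2 + B r 2 * B s 1)) *
        (x * (B r 2 * B s 3 + B r 3 * B s 2) + y * (B r 1 * B s 3 + B r 3 * B s 1)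
          + z * (B r 1 * B s 2 + B r 2 * B s 1))) =
    2 * ( (starRingEnd ℂ) x * x * ((∑ r : Fin 4, (starRingEnd ℂ) (B r 2) * B r 2) * (∑ r : Fin 4, (starRingEnd ℂ) (B r 3) * B r 3) + (∑ r : Fin 4, (starRingEnd ℂ) (B r 2) * B r 3) * (∑ r : Fin 4, (starRingEnd ℂ) (B r 3) * B r 2))
    + (starRingEnd ℂ) x * y * ((∑ r : Fin 4, (starRingEnd ℂ) (B r 2) * B r 1) * (∑ r : Fin 4, (starRingEnd ℂ) (B r 3) * B r 3) + (∑ r : Fin 4, (starRingEnd ℂ) (B r 2) * B r 3) * (∑ r : Fin 4, (starRingEnd ℂ) (B r 3) * B r 1))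
    + (starRingEnd ℂ) x * z * ((∑ r : Fin 4, (starRingEnd ℂ) (B r 2) * B r 1) * (∑ r : Fin 4, (starRingEnd ℂ) (B r 3) * B r 2) + (∑ r : Fin 4, (starRingEnd ℂ) (B r 2) * B r 2) * (∑ r : Fin 4, (starRingEnd ℂ) (B r 3) * B r 1))
    + (starRingEnd ℂ) y * x * ((∑ r : Fin 4, (starRingEnd ℂ) (B r 1) * B r 2) * (∑ r : Fin 4, (starRingEnd ℂ) (B r 3) * B r 3) + (∑ r : Fin 4, (starRingEnd ℂ) (B r 1) * B r 3) * (∑ r : Fin 4, (starRingEnd ℂ) (B r 3) * B r 2))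
    + (starRingEnd ℂ) y * y * ((∑ r : Fin 4, (starRingEnd ℂ) (B r 1) * B r 1) * (∑ r : Fin 4, (starRingEnd ℂ) (B r 3) * B r 3) + (∑ r : Fin 4, (starRingEnd ℂ) (B r 1) * B r 3) * (∑ r : Fin 4, (starRingEnd ℂ) (B r 3) * B r 1))
    + (starRingEnd ℂ) y * z * ((∑ r : Fin 4, (starRingEnd ℂ) (B r 1) * B r 1) * (∑ r : Fin 4, (starRingEnd ℂ) (B r 3) * B r 2) + (∑ r : Fin 4, (starRingEnd ℂ) (B r 1) * B r 2) * (∑ r : Fin 4, (starRingEnd ℂ) (B r 3) * B r 1))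
    + (starRingEnd ℂ) z * x * ((∑ r : Fin 4, (starRingEnd ℂ) (B r 1) * B r 2) * (∑ r : Fin 4, (starRingEnd ℂ) (B r 2) * B r 3) + (∑ r : Fin 4, (starRingEnd ℂ) (B r 1) * B r 3) * (∑ r : Fin 4, (starRingEnd ℂ) (B r 2) * B r 2))
    + (starRingEnd ℂ) z * y * ((∑ r : Fin 4, (starRingEnd ℂ) (B r 1) * B r 1) * (∑ r : Fin 4, (starRingEnd ℂ) (B r 2) * B r 3) + (∑ r : Fin 4, (starRingEnd ℂ) (B r 1) * B r 3) * (∑ r : Fin 4, (starRingEnd ℂ) (B r 2) * B r 1))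
    + (starRingEnd ℂ) z * z * ((∑ r : Fin 4, (starRingEnd ℂ) (B r 1) * B r 1) * (∑ r : Fin 4, (starRingEnd ℂ) (B r 2) * B r 2) + (∑ r : Fin 4, (starRingEnd ℂ) (B r 1) * B r 2) * (∑ r : Fin 4, (starRingEnd ℂ) (B r 2) * B r 1)) ) := by
  simp only [Fin.sum_univ_four, _root_.map_add, _root_.map_mul]
  ring

theorem lemma2_y4 (x y z t u w : ℂ)
    (A : Matrix (Fin 4) (Fin 4) ℂ)
    (hAdef : A = !![1, x, y, z;
                    (starRingEnd ℂ) x, 1, t, u;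
                    (starRingEnd ℂ) y, (starRingEnd ℂ) t, 1, w;
                    (starRingEnd ℂ) z, (starRingEnd ℂ) u, (starRingEnd ℂ) w, 1])
    (hA : A.PosSemidef) :
    ((1 + 2 * (t * w * (starRingEnd ℂ) u).re + ‖t‖ ^ 2 + ‖u‖ ^ 2 + ‖w‖ ^ 2 : ℝ) : ℂ) ≤ A.permanent ∧
      (0 : ℝ) ≤ 1 + 2 * (t * w * (starRingEnd ℂ) u).re + ‖t‖ ^ 2 + ‖u‖ ^ 2 + ‖w‖ ^ 2 := by
  subst hAdef
  -- abs bounds from the quadratic form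
  have hq1 : (0 : ℂ) ≤ ((1 : ℂ) - (Complex.normSq t : ℝ)) := by
    have := hA.dotProduct_mulVec_nonneg ![0, t, -1, 0]
    simpa [Matrix.mulVec, dotProduct, Fin.sum_univ_four, Complex.mul_conj,
      mul_comm, mul_left_comm, sub_eq_add_neg] using this
  have hq2 : (0 : ℂ) ≤ ((1 : ℂ) - (Complex.normSq w : ℝ)) := by
    have := hA.dotProduct_mulVec_nonneg ![0, 0, w, -1]
    simpa [Matrix.mulVec, dotProduct, Fin.sum_univ_four, Complex.mul_conj,
      mul_comm, mul_left_comm, sub_eq_add_neg] using this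
  have ht1 : ‖t‖ ^ 2 ≤ 1 := by
    rw [Complex.sq_norm]
    have := (Complex.le_def.mp hq1).1
    simpa using this
  have hw1 : ‖w‖ ^ 2 ≤ 1 := by
    rw [Complex.sq_norm]
    have := (Complex.le_def.mp hq2).1
    simpa using this
  have hre : -(‖t‖ * ‖u‖ * ‖w‖) ≤ (t * w * (starRingEnd ℂ) u).re := by
    have h1 : |(t * w * (starRingEnd ℂ) u).re| ≤ ‖t * w * (starRingEnd ℂ) u‖ :=
      Complex.abs_re_le_norm _
    have h2 : ‖t * w * (starRingEnd ℂ) u‖ = ‖t‖ * ‖u‖ * ‖w‖ := by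
      simp [_root_.map_mul, Complex.norm_conj]; ring
    nlinarith [neg_abs_le ((t * w * (starRingEnd ℂ) u).re)]
  have hpart2 : (0 : ℝ) ≤ 1 + 2 * (t * w * (starRingEnd ℂ) u).re + ‖t‖ ^ 2 +
      ‖u‖ ^ 2 + ‖w‖ ^ 2 := by
    nlinarith [sq_nonneg (‖u‖ - ‖t‖ * ‖w‖),
      mul_nonneg (sq_nonneg (‖t‖)) (sub_nonneg.mpr hw1),
      norm_nonneg t, norm_nonneg u, norm_nonneg w]
  refine ⟨?_, hpart2⟩
  -- Gram decomposition
  obtain ⟨B, hB⟩ := by open scoped MatrixOrder in exact CStarAlgebra.nonneg_iff_eq_star_mul_self.mp hA.nonneg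
  rw [Matrix.star_eq_conjTranspose] at hB
  have entry : ∀ i j : Fin 4, (∑ r : Fin 4, (starRingEnd ℂ) (B r i) * B r j) =
      !![1, x, y, z;
        (starRingEnd ℂ) x, 1, t, u;
        (starRingEnd ℂ) y, (starRingEnd ℂ) t, 1, w;
        (starRingEnd ℂ) z, (starRingEnd ℂ) u, (starRingEnd ℂ) w, 1] i j := by
    intro i j
    rw [hB, Matrix.mul_apply]
    exact Finset.sum_congr rfl fun r _ => by
      rw [Matrix.conjTranspose_apply, starRingEnd_apply]
  have ht := entry 1 2
  have hu := entry 1 3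
  have hw := entry 2 3
  have h11 := entry 1 1
  have h22 := entry 2 2
  have h33 := entry 3 3
  have h21 := entry 2 1
  have h31 := entry 3 1
  have h32 := entry 3 2
  simp at ht hu hw h11 h22 h33 h21 h31 h32
  have hper : (!![1, x, y, z;
        (starRingEnd ℂ) x, 1, t, u;
        (starRingEnd ℂ) y, (starRingEnd ℂ) t, 1, w;
        (starRingEnd ℂ) z, (starRingEnd ℂ) u, (starRingEnd ℂ) w, 1] : Matrix (Fin 4) (Fin 4) ℂ).permanent =
      1 + t * (starRingEnd ℂ) t + u * (starRingEnd ℂ) u + w * (starRingEnd ℂ) w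
        + t * w * (starRingEnd ℂ) u + (starRingEnd ℂ) t * (starRingEnd ℂ) w * u
      + ((starRingEnd ℂ) x * x * (1 + w * (starRingEnd ℂ) w)
        + (starRingEnd ℂ) x * y * ((starRingEnd ℂ) t + w * (starRingEnd ℂ) u)
        + (starRingEnd ℂ) x * z * ((starRingEnd ℂ) t * (starRingEnd ℂ) w + (starRingEnd ℂ) u)
        + (starRingEnd ℂ) y * x * (t + (starRingEnd ℂ) w * u)
        + (starRingEnd ℂ) y * y * (1 + u * (starRingEnd ℂ) u)
        + (starRingEnd ℂ) y * z * ((starRingEnd ℂ) w + t * (starRingEnd ℂ) u)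
        + (starRingEnd ℂ) z * x * (t * w + u)
        + (starRingEnd ℂ) z * y * (w + (starRingEnd ℂ) t * u)
        + (starRingEnd ℂ) z * z * (1 + t * (starRingEnd ℂ) t)) := by
    rw [permanent_fin_four_aux]
    simp
    ring
  have hgram := gram_key_aux x y z B
  rw [ht, hu, hw, h11, h22, h33, h21, h31, h32] at hgram
  have hS : (0 : ℂ) ≤ ∑ r : Fin 4, ∑ s : Fin 4,
      (starRingEnd ℂ) (x * (B r 2 * B s 3 + B r 3 * B s 2) + y * (B r 1 * B s 3 + B r 3 * B s 1)
          + z * (B r 1 * B s 2 + B r 2 * B s 1)) *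
        (x * (B r 2 * B s 3 + B r 3 * B s 2) + y * (B r 1 * B s 3 + B r 3 * B s 1)
          + z * (B r 1 * B s 2 + B r 2 * B s 1)) := by
    refine Finset.sum_nonneg fun r _ => Finset.sum_nonneg fun s _ => ?_
    rw [starRingEnd_apply]
    exact star_mul_self_nonneg _
  set RHSc : ℂ := 1 + t * w * (starRingEnd ℂ) u + (starRingEnd ℂ) (t * w * (starRingEnd ℂ) u)
      + t * (starRingEnd ℂ) t + u * (starRingEnd ℂ) u + w * (starRingEnd ℂ) w with hRHSc
  have hcast : ((1 + 2 * (t * w * (starRingEnd ℂ) u).re + ‖t‖ ^ 2 + ‖u‖ ^ 2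
      + ‖w‖ ^ 2 : ℝ) : ℂ) = RHSc := by
    have h1 := Complex.add_conj (t * w * (starRingEnd ℂ) u)
    rw [hRHSc, Complex.mul_conj, Complex.mul_conj, Complex.mul_conj,
      show ‖t‖ ^ 2 = Complex.normSq t from Complex.sq_norm t,
      show ‖u‖ ^ 2 = Complex.normSq u from Complex.sq_norm u,
      show ‖w‖ ^ 2 = Complex.normSq w from Complex.sq_norm w]
    push_cast at h1 ⊢
    linear_combination -h1
  rw [hcast]
  have h2 : 2 * (!![1, x, y, z;
        (starRingEnd ℂ) x, 1, t, u;
        (starRingEnd ℂ) y, (starRingEnd ℂ) t, 1, w;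
        (starRingEnd ℂ) z, (starRingEnd ℂ) u, (starRingEnd ℂ) w, 1] : Matrix (Fin 4) (Fin 4) ℂ).permanent
      = 2 * RHSc + ∑ r : Fin 4, ∑ s : Fin 4,
      (starRingEnd ℂ) (x * (B r 2 * B s 3 + B r 3 * B s 2) + y * (B r 1 * B s 3 + B r 3 * B s 1)
          + z * (B r 1 * B s 2 + B r 2 * B s 1)) *
        (x * (B r 2 * B s 3 + B r 3 * B s 2) + y * (B r 1 * B s 3 + B r 3 * B s 1)
          + z * (B r 1 * B s 2 + B r 2 * B s 1)) := by
    have hc : (starRingEnd ℂ) (t * w * (starRingEnd ℂ) u)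
        = (starRingEnd ℂ) t * (starRingEnd ℂ) w * u := by
      simp [_root_.map_mul]
    rw [hper, hRHSc, hc]
    linear_combination -hgram
  obtain ⟨hSre, hSim⟩ := Complex.nonneg_iff.mp hS
  rw [Complex.le_def]
  constructor
  · have h2re := congrArg Complex.re h2
    simp only [Complex.add_re, Complex.mul_re, Complex.re_ofNat, Complex.im_ofNat,
      zero_mul, sub_zero] at h2re
    linarith
  · have h2im := congrArg Complex.im h2
    simp only [Complex.add_im, Complex.mul_im, Complex.re_ofNat, Complex.im_ofNat,
      zero_mul, add_zero, mul_zero] at h2im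
    linarith
end

section
/- If the 4×4 matrix A (as defined) is positive semidefinite and all four quantities y₁ := 2Re(x·ȳ·t), y₂ := 2Re(x·u·z̄), y₃ := 2Re(y·w·z̄), y₄ := 2Re(t·w·ū) are nonnegative, then [per(A)]² ≥ 1 + ½·[s₁² + s₂² + s₃² + s₄²] + (|xw|² + |yu|² + |zt|²)², where s₁ := |x|²+|y|²+|t|², s₂ := |x|²+|z|²+|u|², s₃ := |y|²+|z|²+|w|², s₄ := |t|²+|u|²+|w|². -/
open Matrix Complex ComplexOrder

lemma psd_det_nonneg_aux {n : ℕ} {M : Matrix (Fin n) (Fin n) ℂ} (hM : M.PosSemidef) :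
    0 ≤ M.det := by
  rw [hM.isHermitian.det_eq_prod_eigenvalues]
  have h1 : (∏ i : Fin n, ((hM.isHermitian.eigenvalues i : ℝ) : ℂ))
      = (((∏ i : Fin n, hM.isHermitian.eigenvalues i : ℝ)) : ℂ) := by
    push_cast; rfl
  rw [show (∏ i : Fin n, (RCLike.ofReal (hM.isHermitian.eigenvalues i) : ℂ))
      = ∏ i : Fin n, ((hM.isHermitian.eigenvalues i : ℝ) : ℂ) from rfl, h1]
  exact Complex.zero_le_real.2 (Finset.prod_nonneg fun i _ => hM.eigenvalues_nonneg i)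

lemma auxQP_c1b (a b c d e f : ℝ) :
    a*f*(b*e) + a*f*(c*d) + b*e*(c*d) ≤ (a*f)^2+(b*e)^2+(c*d)^2 := by
  nlinarith [sq_nonneg (a*f-b*e), sq_nonneg (a*f-c*d), sq_nonneg (b*e-c*d)]

lemma auxPS_c1b (a b c d e f : ℝ) (ha2 : a^2 ≤ 1) (hb2 : b^2 ≤ 1) (hc2 : c^2 ≤ 1)
    (hd2 : d^2 ≤ 1) (he2 : e^2 ≤ 1) (hf2 : f^2 ≤ 1) :
    2*((a*f)^2+(b*e)^2+(c*d)^2) ≤ a^2+b^2+c^2+d^2+e^2+f^2 := by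
  nlinarith [mul_nonneg (sq_nonneg a) (sub_nonneg.2 hf2),
    mul_nonneg (sq_nonneg f) (sub_nonneg.2 ha2),
    mul_nonneg (sq_nonneg b) (sub_nonneg.2 he2),
    mul_nonneg (sq_nonneg e) (sub_nonneg.2 hb2),
    mul_nonneg (sq_nonneg c) (sub_nonneg.2 hd2),
    mul_nonneg (sq_nonneg d) (sub_nonneg.2 hc2)]

lemma auxM_c1b (a b c d e f : ℝ) :
    2*((a*f)^2+(b*e)^2+(c*d)^2) + (c^2-d^2)^2
      ≤ (a^2+b^2+d^2)*(d^2+e^2+f^2) + (a^2+c^2+e^2)*(b^2+c^2+f^2) := by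
  nlinarith [mul_nonneg (sq_nonneg a) (sq_nonneg d), mul_nonneg (sq_nonneg a) (sq_nonneg e),
    mul_nonneg (sq_nonneg b) (sq_nonneg d), mul_nonneg (sq_nonneg b) (sq_nonneg f),
    mul_nonneg (sq_nonneg d) (sq_nonneg e), mul_nonneg (sq_nonneg d) (sq_nonneg f),
    mul_nonneg (sq_nonneg a) (sq_nonneg b), mul_nonneg (sq_nonneg a) (sq_nonneg c),
    mul_nonneg (sq_nonneg b) (sq_nonneg c), mul_nonneg (sq_nonneg c) (sq_nonneg f),
    mul_nonneg (sq_nonneg c) (sq_nonneg e), mul_nonneg (sq_nonneg e) (sq_nonneg f)]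

theorem key_real_c1b (a b c d e f y1 y2 y3 y4 c1 c2 c3 : ℝ)
    (ha2 : a^2 ≤ 1) (hb2 : b^2 ≤ 1) (hc2 : c^2 ≤ 1)
    (hd2 : d^2 ≤ 1) (he2 : e^2 ≤ 1) (hf2 : f^2 ≤ 1)
    (hy1 : 0 ≤ y1) (hy2 : 0 ≤ y2) (hy3 : 0 ≤ y3) (hy4 : 0 ≤ y4)
    (hm1 : a^2+b^2+d^2 ≤ 1 + y1) (hm2 : a^2+c^2+e^2 ≤ 1 + y2)
    (hm3 : b^2+c^2+f^2 ≤ 1 + y3) (hm4 : d^2+e^2+f^2 ≤ 1 + y4)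
    (hc1b : -(2*(a*d*f*c)) ≤ c1) (hc2b : -(2*(a*e*b*f)) ≤ c2) (hc3b : -(2*(c*d*b*e)) ≤ c3) :
    1 + (1/2)*((a^2+b^2+d^2)^2+(a^2+c^2+e^2)^2+(b^2+c^2+f^2)^2+(d^2+e^2+f^2)^2)
      + ((a*f)^2+(b*e)^2+(c*d)^2)^2
    ≤ (1 + (a^2+b^2+c^2+d^2+e^2+f^2) + ((a*f)^2+(b*e)^2+(c*d)^2)
        + (y1+y2+y3+y4) + (c1+c2+c3))^2 := by
  have hQP := auxQP_c1b a b c d e f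
  have hPS := auxPS_c1b a b c d e f ha2 hb2 hc2 hd2 he2 hf2
  have hm := auxM_c1b a b c d e f
  have hC : -(2*(a*f*(b*e) + a*f*(c*d) + b*e*(c*d))) ≤ c1+c2+c3 := by linarith
  have hS0 : (0:ℝ) ≤ a^2+b^2+c^2+d^2+e^2+f^2 := by positivity
  rcases le_total (a^2+b^2+c^2+d^2+e^2+f^2) 2 with hS | hS
  · have hL : 1 + (a^2+b^2+c^2+d^2+e^2+f^2) - ((a*f)^2+(b*e)^2+(c*d)^2)
        ≤ 1 + (a^2+b^2+c^2+d^2+e^2+f^2) + ((a*f)^2+(b*e)^2+(c*d)^2)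
          + (y1+y2+y3+y4) + (c1+c2+c3) := by linarith
    have hL0 : (0:ℝ) ≤ 1 + (a^2+b^2+c^2+d^2+e^2+f^2) - ((a*f)^2+(b*e)^2+(c*d)^2) := by
      linarith
    have hsq := mul_self_le_mul_self hL0 hL
    have ht1 : (0:ℝ) ≤ (a^2+b^2+c^2+d^2+e^2+f^2)*(2 - (a^2+b^2+c^2+d^2+e^2+f^2)) :=
      mul_nonneg hS0 (by linarith)
    have ht2 : (0:ℝ) ≤ (a^2+b^2+c^2+d^2+e^2+f^2)*((a^2+b^2+c^2+d^2+e^2+f^2)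
        - 2*((a*f)^2+(b*e)^2+(c*d)^2)) := mul_nonneg hS0 (by linarith)
    linarith [hsq, hm, ht1, ht2]
  · have hL : 3*(a^2+b^2+c^2+d^2+e^2+f^2) - 3 - ((a*f)^2+(b*e)^2+(c*d)^2)
        ≤ 1 + (a^2+b^2+c^2+d^2+e^2+f^2) + ((a*f)^2+(b*e)^2+(c*d)^2)
          + (y1+y2+y3+y4) + (c1+c2+c3) := by linarith
    have hL0 : (0:ℝ) ≤ 3*(a^2+b^2+c^2+d^2+e^2+f^2) - 3 - ((a*f)^2+(b*e)^2+(c*d)^2) := by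
      linarith
    have hsq := mul_self_le_mul_self hL0 hL
    have ht1 : (0:ℝ) ≤ ((a^2+b^2+c^2+d^2+e^2+f^2) - 2)*(5*(a^2+b^2+c^2+d^2+e^2+f^2) - 4) :=
      mul_nonneg (by linarith) (by linarith)
    have ht2 : (0:ℝ) ≤ (3*(a^2+b^2+c^2+d^2+e^2+f^2) - 4)*((a^2+b^2+c^2+d^2+e^2+f^2)
        - 2*((a*f)^2+(b*e)^2+(c*d)^2)) := mul_nonneg (by linarith) (by linarith)
    linarith [hsq, hm, ht1, ht2]

set_option maxHeartbeats 2000000 in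
theorem permanent_real_c1b (x y z t u w : ℂ) :
    (!![1, x, y, z;
        (starRingEnd ℂ) x, 1, t, u;
        (starRingEnd ℂ) y, (starRingEnd ℂ) t, 1, w;
        (starRingEnd ℂ) z, (starRingEnd ℂ) u, (starRingEnd ℂ) w, 1]).permanent
    = ((1 + (‖x‖^2 + ‖y‖^2 + ‖z‖^2 + ‖t‖^2
          + ‖u‖^2 + ‖w‖^2)
        + ((‖x‖ * ‖w‖)^2 + (‖y‖ * ‖u‖)^2
          + (‖z‖ * ‖t‖)^2)
        + (2*(x*(starRingEnd ℂ) y*t).re + 2*(x*u*(starRingEnd ℂ) z).re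
          + 2*(y*w*(starRingEnd ℂ) z).re + 2*(t*w*(starRingEnd ℂ) u).re)
        + (2*(x*t*w*(starRingEnd ℂ) z).re + 2*(x*u*(starRingEnd ℂ) y*(starRingEnd ℂ) w).re
          + 2*(z*t*(starRingEnd ℂ) y*(starRingEnd ℂ) u).re) : ℝ) : ℂ) := by
  rw [permanent_fin_four_aux]
  simp only [Matrix.cons_val', Matrix.cons_val_zero, Matrix.cons_val_one, Matrix.head_cons,
    Matrix.empty_val', Matrix.cons_val_fin_one, Matrix.head_fin_const, Matrix.cons_val_two,
    Matrix.tail_cons, Matrix.cons_val_three, Matrix.of_apply]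
  apply Complex.ext <;>
    simp [Complex.add_re, Complex.add_im, Complex.mul_re, Complex.mul_im, Complex.ofReal_re,
      Complex.ofReal_im, mul_pow, Complex.sq_norm, Complex.normSq_apply] <;> ring

set_option maxHeartbeats 4000000 in
theorem case1_bound (x y z t u w : ℂ)
    (A : Matrix (Fin 4) (Fin 4) ℂ)
    (hAdef : A = !![1, x, y, z;
                    (starRingEnd ℂ) x, 1, t, u;
                    (starRingEnd ℂ) y, (starRingEnd ℂ) t, 1, w;
                    (starRingEnd ℂ) z, (starRingEnd ℂ) u, (starRingEnd ℂ) w, 1])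
    (hA : A.PosSemidef)
    (hy1 : (0:ℝ) ≤ 2 * (x * (starRingEnd ℂ) y * t).re)
    (hy2 : (0:ℝ) ≤ 2 * (x * u * (starRingEnd ℂ) z).re)
    (hy3 : (0:ℝ) ≤ 2 * (y * w * (starRingEnd ℂ) z).re)
    (hy4 : (0:ℝ) ≤ 2 * (t * w * (starRingEnd ℂ) u).re) :
    ((1 + (1/2 : ℝ) *
        ((‖x‖ ^ 2 + ‖y‖ ^ 2 + ‖t‖ ^ 2) ^ 2
          + (‖x‖ ^ 2 + ‖z‖ ^ 2 + ‖u‖ ^ 2) ^ 2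
          + (‖y‖ ^ 2 + ‖z‖ ^ 2 + ‖w‖ ^ 2) ^ 2
          + (‖t‖ ^ 2 + ‖u‖ ^ 2 + ‖w‖ ^ 2) ^ 2)
        + (‖x * w‖ ^ 2 + ‖y * u‖ ^ 2
            + ‖z * t‖ ^ 2) ^ 2 : ℝ) : ℂ) ≤ A.permanent ^ 2 := by
  subst hAdef
  have hsqx : ‖x‖ ^ 2 ≤ 1 := by
    have h := psd_det_nonneg_aux (hA.submatrix ![0,1])
    rw [Matrix.det_fin_two] at h
    simp only [Matrix.submatrix_apply, Matrix.cons_val', Matrix.cons_val_zero, Matrix.cons_val_one,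
      Matrix.head_cons, Matrix.empty_val', Matrix.cons_val_fin_one, Matrix.head_fin_const,
      Matrix.cons_val_two, Matrix.tail_cons, Matrix.cons_val_three, Matrix.of_apply] at h
    have h2 := (Complex.le_def.1 h).1
    simp only [Complex.zero_re, Complex.sub_re, Complex.mul_re, Complex.one_re, Complex.one_im,
      Complex.conj_re, Complex.conj_im] at h2
    rw [Complex.sq_norm, Complex.normSq_apply]
    nlinarith [h2]
  have hsqy : ‖y‖ ^ 2 ≤ 1 := by
    have h := psd_det_nonneg_aux (hA.submatrix ![0,2])
    rw [Matrix.det_fin_two] at h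
    simp only [Matrix.submatrix_apply, Matrix.cons_val', Matrix.cons_val_zero, Matrix.cons_val_one,
      Matrix.head_cons, Matrix.empty_val', Matrix.cons_val_fin_one, Matrix.head_fin_const,
      Matrix.cons_val_two, Matrix.tail_cons, Matrix.cons_val_three, Matrix.of_apply] at h
    have h2 := (Complex.le_def.1 h).1
    simp only [Complex.zero_re, Complex.sub_re, Complex.mul_re, Complex.one_re, Complex.one_im,
      Complex.conj_re, Complex.conj_im] at h2
    rw [Complex.sq_norm, Complex.normSq_apply]
    nlinarith [h2]
  have hsqz : ‖z‖ ^ 2 ≤ 1 := by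
    have h := psd_det_nonneg_aux (hA.submatrix ![0,3])
    rw [Matrix.det_fin_two] at h
    simp only [Matrix.submatrix_apply, Matrix.cons_val', Matrix.cons_val_zero, Matrix.cons_val_one,
      Matrix.head_cons, Matrix.empty_val', Matrix.cons_val_fin_one, Matrix.head_fin_const,
      Matrix.cons_val_two, Matrix.tail_cons, Matrix.cons_val_three, Matrix.of_apply] at h
    have h2 := (Complex.le_def.1 h).1
    simp only [Complex.zero_re, Complex.sub_re, Complex.mul_re, Complex.one_re, Complex.one_im,
      Complex.conj_re, Complex.conj_im] at h2
    rw [Complex.sq_norm, Complex.normSq_apply]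
    nlinarith [h2]
  have hsqt : ‖t‖ ^ 2 ≤ 1 := by
    have h := psd_det_nonneg_aux (hA.submatrix ![1,2])
    rw [Matrix.det_fin_two] at h
    simp only [Matrix.submatrix_apply, Matrix.cons_val', Matrix.cons_val_zero, Matrix.cons_val_one,
      Matrix.head_cons, Matrix.empty_val', Matrix.cons_val_fin_one, Matrix.head_fin_const,
      Matrix.cons_val_two, Matrix.tail_cons, Matrix.cons_val_three, Matrix.of_apply] at h
    have h2 := (Complex.le_def.1 h).1
    simp only [Complex.zero_re, Complex.sub_re, Complex.mul_re, Complex.one_re, Complex.one_im,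
      Complex.conj_re, Complex.conj_im] at h2
    rw [Complex.sq_norm, Complex.normSq_apply]
    nlinarith [h2]
  have hsqu : ‖u‖ ^ 2 ≤ 1 := by
    have h := psd_det_nonneg_aux (hA.submatrix ![1,3])
    rw [Matrix.det_fin_two] at h
    simp only [Matrix.submatrix_apply, Matrix.cons_val', Matrix.cons_val_zero, Matrix.cons_val_one,
      Matrix.head_cons, Matrix.empty_val', Matrix.cons_val_fin_one, Matrix.head_fin_const,
      Matrix.cons_val_two, Matrix.tail_cons, Matrix.cons_val_three, Matrix.of_apply] at h
    have h2 := (Complex.le_def.1 h).1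
    simp only [Complex.zero_re, Complex.sub_re, Complex.mul_re, Complex.one_re, Complex.one_im,
      Complex.conj_re, Complex.conj_im] at h2
    rw [Complex.sq_norm, Complex.normSq_apply]
    nlinarith [h2]
  have hsqw : ‖w‖ ^ 2 ≤ 1 := by
    have h := psd_det_nonneg_aux (hA.submatrix ![2,3])
    rw [Matrix.det_fin_two] at h
    simp only [Matrix.submatrix_apply, Matrix.cons_val', Matrix.cons_val_zero, Matrix.cons_val_one,
      Matrix.head_cons, Matrix.empty_val', Matrix.cons_val_fin_one, Matrix.head_fin_const,
      Matrix.cons_val_two, Matrix.tail_cons, Matrix.cons_val_three, Matrix.of_apply] at h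
    have h2 := (Complex.le_def.1 h).1
    simp only [Complex.zero_re, Complex.sub_re, Complex.mul_re, Complex.one_re, Complex.one_im,
      Complex.conj_re, Complex.conj_im] at h2
    rw [Complex.sq_norm, Complex.normSq_apply]
    nlinarith [h2]
  have hmm1 : ‖x‖ ^2 + ‖y‖ ^2 + ‖t‖ ^2 ≤ 1 + 2*(x*(starRingEnd ℂ) y*t).re := by
    have h := psd_det_nonneg_aux (hA.submatrix ![0,1,2])
    rw [Matrix.det_fin_three] at h
    simp only [Matrix.submatrix_apply, Matrix.cons_val', Matrix.cons_val_zero, Matrix.cons_val_one,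
      Matrix.head_cons, Matrix.empty_val', Matrix.cons_val_fin_one, Matrix.head_fin_const,
      Matrix.cons_val_two, Matrix.tail_cons, Matrix.cons_val_three, Matrix.of_apply] at h
    have h2 := (Complex.le_def.1 h).1
    simp only [Complex.zero_re, Complex.sub_re, Complex.add_re, Complex.mul_re, Complex.mul_im,
      Complex.sub_im, Complex.add_im, Complex.one_re, Complex.one_im,
      Complex.conj_re, Complex.conj_im] at h2
    simp only [Complex.sq_norm, Complex.normSq_apply, Complex.mul_re, Complex.mul_im,
      Complex.conj_re, Complex.conj_im]
    nlinarith [h2]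
  have hmm2 : ‖x‖ ^2 + ‖z‖ ^2 + ‖u‖ ^2 ≤ 1 + 2*(x*u*(starRingEnd ℂ) z).re := by
    have h := psd_det_nonneg_aux (hA.submatrix ![0,1,3])
    rw [Matrix.det_fin_three] at h
    simp only [Matrix.submatrix_apply, Matrix.cons_val', Matrix.cons_val_zero, Matrix.cons_val_one,
      Matrix.head_cons, Matrix.empty_val', Matrix.cons_val_fin_one, Matrix.head_fin_const,
      Matrix.cons_val_two, Matrix.tail_cons, Matrix.cons_val_three, Matrix.of_apply] at h
    have h2 := (Complex.le_def.1 h).1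
    simp only [Complex.zero_re, Complex.sub_re, Complex.add_re, Complex.mul_re, Complex.mul_im,
      Complex.sub_im, Complex.add_im, Complex.one_re, Complex.one_im,
      Complex.conj_re, Complex.conj_im] at h2
    simp only [Complex.sq_norm, Complex.normSq_apply, Complex.mul_re, Complex.mul_im,
      Complex.conj_re, Complex.conj_im]
    nlinarith [h2]
  have hmm3 : ‖y‖ ^2 + ‖z‖ ^2 + ‖w‖ ^2 ≤ 1 + 2*(y*w*(starRingEnd ℂ) z).re := by
    have h := psd_det_nonneg_aux (hA.submatrix ![0,2,3])
    rw [Matrix.det_fin_three] at h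
    simp only [Matrix.submatrix_apply, Matrix.cons_val', Matrix.cons_val_zero, Matrix.cons_val_one,
      Matrix.head_cons, Matrix.empty_val', Matrix.cons_val_fin_one, Matrix.head_fin_const,
      Matrix.cons_val_two, Matrix.tail_cons, Matrix.cons_val_three, Matrix.of_apply] at h
    have h2 := (Complex.le_def.1 h).1
    simp only [Complex.zero_re, Complex.sub_re, Complex.add_re, Complex.mul_re, Complex.mul_im,
      Complex.sub_im, Complex.add_im, Complex.one_re, Complex.one_im,
      Complex.conj_re, Complex.conj_im] at h2
    simp only [Complex.sq_norm, Complex.normSq_apply, Complex.mul_re, Complex.mul_im,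
      Complex.conj_re, Complex.conj_im]
    nlinarith [h2]
  have hmm4 : ‖t‖ ^2 + ‖u‖ ^2 + ‖w‖ ^2 ≤ 1 + 2*(t*w*(starRingEnd ℂ) u).re := by
    have h := psd_det_nonneg_aux (hA.submatrix ![1,2,3])
    rw [Matrix.det_fin_three] at h
    simp only [Matrix.submatrix_apply, Matrix.cons_val', Matrix.cons_val_zero, Matrix.cons_val_one,
      Matrix.head_cons, Matrix.empty_val', Matrix.cons_val_fin_one, Matrix.head_fin_const,
      Matrix.cons_val_two, Matrix.tail_cons, Matrix.cons_val_three, Matrix.of_apply] at h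
    have h2 := (Complex.le_def.1 h).1
    simp only [Complex.zero_re, Complex.sub_re, Complex.add_re, Complex.mul_re, Complex.mul_im,
      Complex.sub_im, Complex.add_im, Complex.one_re, Complex.one_im,
      Complex.conj_re, Complex.conj_im] at h2
    simp only [Complex.sq_norm, Complex.normSq_apply, Complex.mul_re, Complex.mul_im,
      Complex.conj_re, Complex.conj_im]
    nlinarith [h2]
  have hcb1 : -(2*(‖x‖ * ‖t‖ * ‖w‖ * ‖z‖)) ≤ 2*(x*t*w*(starRingEnd ℂ) z).re := by
    have h := Complex.abs_re_le_norm (x*t*w*(starRingEnd ℂ) z)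
    rw [abs_le] at h
    have h2 := h.1
    simp only [norm_mul, Complex.norm_conj] at h2
    linarith
  have hcb2 : -(2*(‖x‖ * ‖u‖ * ‖y‖ * ‖w‖)) ≤ 2*(x*u*(starRingEnd ℂ) y*(starRingEnd ℂ) w).re := by
    have h := Complex.abs_re_le_norm (x*u*(starRingEnd ℂ) y*(starRingEnd ℂ) w)
    rw [abs_le] at h
    have h2 := h.1
    simp only [norm_mul, Complex.norm_conj] at h2
    linarith
  have hcb3 : -(2*(‖z‖ * ‖t‖ * ‖y‖ * ‖u‖)) ≤ 2*(z*t*(starRingEnd ℂ) y*(starRingEnd ℂ) u).re := by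
    have h := Complex.abs_re_le_norm (z*t*(starRingEnd ℂ) y*(starRingEnd ℂ) u)
    rw [abs_le] at h
    have h2 := h.1
    simp only [norm_mul, Complex.norm_conj] at h2
    linarith
  rw [permanent_real_c1b, ← Complex.ofReal_pow, Complex.real_le_real]
  simp only [norm_mul]
  exact key_real_c1b (‖x‖) (‖y‖) (‖z‖) (‖t‖)
    (‖u‖) (‖w‖) _ _ _ _ _ _ _
    hsqx hsqy hsqz hsqt hsqu hsqw hy1 hy2 hy3 hy4 hmm1 hmm2 hmm3 hmm4 hcb1 hcb2 hcb3
end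

section
/- Let x, y, z, t, u, w be complex numbers each of modulus at most 1, and suppose |x|²+|y|²+|t|² < 1, |x|²+|z|²+|u|² < 1, |y|²+|z|²+|w|² < 1, and |t|²+|u|²+|w|² < 1. Then, with T := |x|² + |y|² + |z|² + |t|² + |u|² + |w|², one has T ≥ |x|⁴ + |y|⁴ + |z|⁴ + |t|⁴ + |u|⁴ + |w|⁴ + 3(|xyt|² + |xzu|² + |yzw|² + |twu|²). -/
lemma key_real (A B C D E F : ℝ)
    (hA : 0 ≤ A) (hB : 0 ≤ B) (hC : 0 ≤ C) (hD : 0 ≤ D) (hE : 0 ≤ E) (hF : 0 ≤ F)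
    (hA1 : A ≤ 1) (hB1 : B ≤ 1) (hC1 : C ≤ 1) (hD1 : D ≤ 1) (hE1 : E ≤ 1) (hF1 : F ≤ 1)
    (h1 : A + B + D < 1) (h2 : A + C + E < 1) (h3 : B + C + F < 1) (h4 : D + E + F < 1) :
    A + B + C + D + E + F ≥
      A^2 + B^2 + C^2 + D^2 + E^2 + F^2 + 3 * (A*B*D + A*C*E + B*C*F + D*E*F) := by
  nlinarith [mul_nonneg hA (by linarith : (0:ℝ) ≤ 1 - A - B - D),
    mul_nonneg hB (by linarith : (0:ℝ) ≤ 1 - A - B - D),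
    mul_nonneg hD (by linarith : (0:ℝ) ≤ 1 - A - B - D),
    mul_nonneg hA (by linarith : (0:ℝ) ≤ 1 - A - C - E),
    mul_nonneg hC (by linarith : (0:ℝ) ≤ 1 - A - C - E),
    mul_nonneg hE (by linarith : (0:ℝ) ≤ 1 - A - C - E),
    mul_nonneg hB (by linarith : (0:ℝ) ≤ 1 - B - C - F),
    mul_nonneg hC (by linarith : (0:ℝ) ≤ 1 - B - C - F),
    mul_nonneg hF (by linarith : (0:ℝ) ≤ 1 - B - C - F),
    mul_nonneg hD (by linarith : (0:ℝ) ≤ 1 - D - E - F),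
    mul_nonneg hE (by linarith : (0:ℝ) ≤ 1 - D - E - F),
    mul_nonneg hF (by linarith : (0:ℝ) ≤ 1 - D - E - F),
    mul_nonneg (mul_nonneg hA hB) (by linarith : (0:ℝ) ≤ 1 - D),
    mul_nonneg (mul_nonneg hA hD) (by linarith : (0:ℝ) ≤ 1 - B),
    mul_nonneg (mul_nonneg hB hD) (by linarith : (0:ℝ) ≤ 1 - A),
    mul_nonneg (mul_nonneg hA hC) (by linarith : (0:ℝ) ≤ 1 - E),
    mul_nonneg (mul_nonneg hA hE) (by linarith : (0:ℝ) ≤ 1 - C),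
    mul_nonneg (mul_nonneg hC hE) (by linarith : (0:ℝ) ≤ 1 - A),
    mul_nonneg (mul_nonneg hB hC) (by linarith : (0:ℝ) ≤ 1 - F),
    mul_nonneg (mul_nonneg hB hF) (by linarith : (0:ℝ) ≤ 1 - C),
    mul_nonneg (mul_nonneg hC hF) (by linarith : (0:ℝ) ≤ 1 - B),
    mul_nonneg (mul_nonneg hD hE) (by linarith : (0:ℝ) ≤ 1 - F),
    mul_nonneg (mul_nonneg hD hF) (by linarith : (0:ℝ) ≤ 1 - E),
    mul_nonneg (mul_nonneg hE hF) (by linarith : (0:ℝ) ≤ 1 - D)]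

theorem T_bound (x y z t u w : ℂ)
    (hx : ‖x‖ ≤ 1) (hy : ‖y‖ ≤ 1) (hz : ‖z‖ ≤ 1)
    (ht : ‖t‖ ≤ 1) (hu : ‖u‖ ≤ 1) (hw : ‖w‖ ≤ 1)
    (h1 : ‖x‖ ^ 2 + ‖y‖ ^ 2 + ‖t‖ ^ 2 < 1)
    (h2 : ‖x‖ ^ 2 + ‖z‖ ^ 2 + ‖u‖ ^ 2 < 1)
    (h3 : ‖y‖ ^ 2 + ‖z‖ ^ 2 + ‖w‖ ^ 2 < 1)
    (h4 : ‖t‖ ^ 2 + ‖u‖ ^ 2 + ‖w‖ ^ 2 < 1) :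
    ‖x‖ ^ 2 + ‖y‖ ^ 2 + ‖z‖ ^ 2
        + ‖t‖ ^ 2 + ‖u‖ ^ 2 + ‖w‖ ^ 2 ≥
      ‖x‖ ^ 4 + ‖y‖ ^ 4 + ‖z‖ ^ 4
        + ‖t‖ ^ 4 + ‖u‖ ^ 4 + ‖w‖ ^ 4
        + 3 * (‖x * y * t‖ ^ 2 + ‖x * z * u‖ ^ 2
            + ‖y * z * w‖ ^ 2 + ‖t * w * u‖ ^ 2) := by
  have key := key_real (‖x‖ ^ 2) (‖y‖ ^ 2) (‖z‖ ^ 2)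
    (‖t‖ ^ 2) (‖u‖ ^ 2) (‖w‖ ^ 2)
    (by positivity) (by positivity) (by positivity) (by positivity) (by positivity) (by positivity)
    (pow_le_one₀ (norm_nonneg x) hx) (pow_le_one₀ (norm_nonneg y) hy)
    (pow_le_one₀ (norm_nonneg z) hz) (pow_le_one₀ (norm_nonneg t) ht)
    (pow_le_one₀ (norm_nonneg u) hu) (pow_le_one₀ (norm_nonneg w) hw)
    h1 h2 h3 h4
  simp only [norm_mul, mul_pow] at *
  ring_nf at key ⊢
  linarith
end
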